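/- Let q be an odd prime with q ≡ 1 (mod 8) or q ≡ −1 (mod 8), and let k be an integer such that k² + 2k − 1 is not divisible by q. Then V_{q−1}(2 + 2k, k² + 2k − 1) ≡ (k² + 2k − 1)^{q−1} + 1 (mod q²). -/

import Mathlib

/-- The Lucas sequence of the second kind `V_n(P, Q)`:
`V_0 = 2`, `V_1 = P`, `V_i = P * V_{i-1} - Q * V_{i-2}`. -/
def lucasV (P Q : ℤ) : ℕ → ℤ
  | 0 => 2
  | 1 => P
  | n + 2 => P * lucasV P Q (n + 1) - Q * lucasV P Q n

lemma lucasV_cast {R : Type*} [CommRing R] (P Q : ℤ) (a b : R)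
    (hP : (P : R) = a + b) (hQ : (Q : R) = a * b) :
    ∀ n, ((lucasV P Q n : ℤ) : R) = a ^ n + b ^ n
  | 0 => by norm_num [lucasV]
  | 1 => by simp [lucasV, hP]
  | (n + 2) => by
    have h1 := lucasV_cast P Q a b hP hQ (n + 1)
    have h2 := lucasV_cast P Q a b hP hQ n
    simp only [lucasV]
    push_cast
    rw [h1, h2, hP, hQ]
    ring

/-- Hensel lift of a square root of 2 modulo an odd prime. -/
lemma sq_two_lift (q : ℕ) (hq : q.Prime) (hodd : Odd q)
    (h2 : IsSquare (2 : ZMod q)) : ∃ r : ℤ, ((q : ℤ)) ^ 2 ∣ r ^ 2 - 2 := by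
  haveI : Fact q.Prime := ⟨hq⟩
  obtain ⟨t, ht⟩ := h2
  have hq2 : q ≠ 2 := by rintro rfl; exact (Nat.not_odd_iff_even.mpr (by norm_num)) hodd
  have h2ne : (2 : ZMod q) ≠ 0 := by
    intro h
    have := (ZMod.natCast_eq_zero_iff 2 q).mp (by exact_mod_cast h)
    exact hq2 ((Nat.prime_dvd_prime_iff_eq hq Nat.prime_two).mp this)
  have htne : t ≠ 0 := by rintro rfl; simp at ht; exact h2ne ht
  set s : ℤ := (t.val : ℤ) with hs
  have hst : ((s : ℤ) : ZMod q) = t := by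
    rw [hs]; push_cast; simp [ZMod.natCast_val, ZMod.cast_id]
  have hdvd : (q : ℤ) ∣ s ^ 2 - 2 := by
    rw [← ZMod.intCast_zmod_eq_zero_iff_dvd]
    push_cast
    rw [hst, ht]; ring
  obtain ⟨c, hc⟩ := hdvd
  set u : ℤ := (((2 * t)⁻¹ : ZMod q).val : ℤ) with hu
  have hsu : (q : ℤ) ∣ 1 - 2 * s * u := by
    rw [← ZMod.intCast_zmod_eq_zero_iff_dvd]
    push_cast
    rw [hst, hu]
    have : (((((2 * t)⁻¹ : ZMod q).val : ℤ)) : ZMod q) = (2 * t)⁻¹ := by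
      push_cast; simp [ZMod.natCast_val, ZMod.cast_id]
    rw [this]
    have h2t : (2 * t : ZMod q) ≠ 0 := mul_ne_zero h2ne htne
    field_simp
    ring
  obtain ⟨d, hd⟩ := hsu
  refine ⟨s - q * c * u, ⟨c * d + c ^ 2 * u ^ 2, ?_⟩⟩
  have : (s - q * c * u) ^ 2 - 2 = (s ^ 2 - 2) - 2 * s * u * (q * c) + q ^ 2 * c ^ 2 * u ^ 2 := by
    ring
  rw [this, hc]
  linear_combination (q : ℤ) * c * hd

/-- **(21).** If `q` is an odd prime with `q ≡ ±1 (mod 8)` and `q ∤ k² + 2k - 1`, then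
`V_{q-1}(2 + 2k, k² + 2k - 1) ≡ (k² + 2k - 1)^{q-1} + 1 (mod q²)`. -/
theorem lucasV_pell_qsub1_congr (q : ℕ) (hq : q.Prime) (hodd : Odd q)
    (h8 : (q : ℤ) ≡ 1 [ZMOD 8] ∨ (q : ℤ) ≡ -1 [ZMOD 8]) (k : ℤ)
    (hk : ¬ (q : ℤ) ∣ (k ^ 2 + 2 * k - 1)) :
    lucasV (2 + 2 * k) (k ^ 2 + 2 * k - 1) (q - 1) ≡
      (k ^ 2 + 2 * k - 1) ^ (q - 1) + 1 [ZMOD (q : ℤ) ^ 2] := by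
  haveI : Fact q.Prime := ⟨hq⟩
  have hq2 : q ≠ 2 := by rintro rfl; exact (Nat.not_odd_iff_even.mpr (by norm_num)) hodd
  -- 2 is a square mod q
  have hmod : q % 8 = 1 ∨ q % 8 = 7 := by
    rcases h8 with h | h
    · obtain ⟨c, hc⟩ := h.dvd
      omega
    · obtain ⟨c, hc⟩ := h.dvd
      omega
  have h2sq : IsSquare (2 : ZMod q) := (ZMod.exists_sq_eq_two_iff hq2).mpr hmod
  obtain ⟨r, hr⟩ := sq_two_lift q hq hodd h2sq
  haveI : NeZero (q ^ 2) := ⟨pow_ne_zero _ hq.ne_zero⟩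
  have hr2 : ((r : ℤ) : ZMod (q ^ 2)) ^ 2 = 2 := by
    have h0 : (((r ^ 2 - 2 : ℤ)) : ZMod (q ^ 2)) = 0 := by
      rw [ZMod.intCast_zmod_eq_zero_iff_dvd]
      exact_mod_cast hr
    push_cast at h0
    linear_combination h0
  set a : ZMod (q ^ 2) := ((1 + k : ℤ) : ZMod (q ^ 2)) + ((r : ℤ) : ZMod (q ^ 2)) with ha
  set b : ZMod (q ^ 2) := ((1 + k : ℤ) : ZMod (q ^ 2)) - ((r : ℤ) : ZMod (q ^ 2)) with hb
  have hP : ((2 + 2 * k : ℤ) : ZMod (q ^ 2)) = a + b := by rw [ha, hb]; push_cast; ring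
  have hQ : ((k ^ 2 + 2 * k - 1 : ℤ) : ZMod (q ^ 2)) = a * b := by
    rw [ha, hb]; push_cast; linear_combination hr2
  have hcast := lucasV_cast (2 + 2 * k) (k ^ 2 + 2 * k - 1) a b hP hQ (q - 1)
  -- the castHom to ZMod q
  set f : ZMod (q ^ 2) →+* ZMod q := ZMod.castHom (dvd_pow_self q two_ne_zero) (ZMod q) with hf
  have hQq : ((k ^ 2 + 2 * k - 1 : ℤ) : ZMod q) ≠ 0 := fun h =>
    hk ((ZMod.intCast_zmod_eq_zero_iff_dvd _ q).mp h)
  have hfab : f a * f b = ((k ^ 2 + 2 * k - 1 : ℤ) : ZMod q) := by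
    rw [← map_mul, ← hQ, map_intCast]
  have hfa : f a ≠ 0 := fun h => hQq (by rw [← hfab, h, zero_mul])
  have hfb : f b ≠ 0 := fun h => hQq (by rw [← hfab, h, mul_zero])
  have hdiv : ∀ z : ZMod (q ^ 2), f z = 0 → ∃ y : ZMod (q ^ 2), z = (q : ZMod (q ^ 2)) * y := by
    intro z hz
    have h1 : (z.val : ZMod q) = 0 := by
      rw [hf] at hz
      rwa [ZMod.natCast_val, ← ZMod.castHom_apply (h := dvd_pow_self q two_ne_zero)]
    have h2 : q ∣ z.val := (ZMod.natCast_eq_zero_iff _ _).mp h1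
    obtain ⟨m, hm⟩ := h2
    refine ⟨(m : ZMod (q ^ 2)), ?_⟩
    have hv : ((z.val : ℕ) : ZMod (q ^ 2)) = z := by
      rw [ZMod.natCast_val, ZMod.cast_id]
    rw [← hv, hm]; push_cast; ring
  have hfer : ∀ c : ZMod (q ^ 2), f c ≠ 0 → ∃ y, c ^ (q - 1) - 1 = (q : ZMod (q ^ 2)) * y := by
    intro c hc
    apply hdiv
    rw [map_sub, map_pow, map_one, ZMod.pow_card_sub_one_eq_one hc, sub_self]
  obtain ⟨x, hx⟩ := hfer a hfa
  obtain ⟨y, hy⟩ := hfer b hfb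
  have hqsq : (q : ZMod (q ^ 2)) ^ 2 = 0 := by
    have := ZMod.natCast_self (q ^ 2)
    push_cast at this
    exact this
  have hzero : (a ^ (q - 1) - 1) * (b ^ (q - 1) - 1) = 0 := by
    rw [hx, hy]
    linear_combination x * y * hqsq
  have key : ((lucasV (2 + 2 * k) (k ^ 2 + 2 * k - 1) (q - 1) : ℤ) : ZMod (q ^ 2)) =
      (((k ^ 2 + 2 * k - 1) ^ (q - 1) + 1 : ℤ) : ZMod (q ^ 2)) := by
    rw [hcast, Int.cast_add, Int.cast_pow, Int.cast_one, hQ, mul_pow]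
    linear_combination -hzero
  have := (ZMod.intCast_eq_intCast_iff _ _ _).mp key
  exact_mod_cast this
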